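/- If Y is a random variable taking two values 0 < α < β with P(Y=α) = 1-p, P(Y=β) = p, 0 < p < 1, then T(Y) = (β-α)p(1-p)/(α(1-p) + βp). -/

import Mathlib

open MeasureTheory Complex

/-- Fourier transform `f̂(ξ) = ∫ e^{-iξx} dF(x)` of a measure on `ℝ`. -/
noncomputable def ft (μ : Measure ℝ) (ξ : ℝ) : ℂ :=
  ∫ x, Complex.exp (-(Complex.I * ξ * x)) ∂μ

/-- Derivative of the Fourier transform: `f̂'(ξ) = -i ∫ x e^{-iξx} dF(x)`. -/
noncomputable def ft' (μ : Measure ℝ) (ξ : ℝ) : ℂ :=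
  ∫ x, -(Complex.I * x) * Complex.exp (-(Complex.I * ξ * x)) ∂μ

/-- The Fourier-based inequality index `T(F) = (1/2) sup_ξ |f̂(ξ) - f̂'(ξ)/f̂'(0)|`. -/
noncomputable def Tindex (μ : Measure ℝ) : ℝ :=
  (1 / 2) * ⨆ ξ : ℝ, ‖ft μ ξ - ft' μ ξ / ft' μ 0‖

lemma my_integrable_dirac {f : ℝ → ℂ} (hf : Measurable f) (a : ℝ) :
    Integrable f (Measure.dirac a) := by
  refine ⟨hf.aestronglyMeasurable, ?_⟩
  rw [HasFiniteIntegral, lintegral_dirac]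
  exact ENNReal.coe_lt_top

lemma my_integral_two_point {p a b : ℝ} (hp0 : 0 < p) (hp1 : p < 1)
    {f : ℝ → ℂ} (hf : Measurable f) :
    ∫ x, f x ∂(ENNReal.ofReal (1 - p) • Measure.dirac a + ENNReal.ofReal p • Measure.dirac b)
      = (1 - p) * f a + p * f b := by
  rw [integral_add_measure, integral_smul_measure, integral_smul_measure,
    integral_dirac, integral_dirac, ENNReal.toReal_ofReal (by linarith),
    ENNReal.toReal_ofReal hp0.le]
  · simp [smul_eq_mul]
  · exact ((my_integrable_dirac hf a).smul_measure ENNReal.ofReal_ne_top)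
  · exact ((my_integrable_dirac hf b).smul_measure ENNReal.ofReal_ne_top)

lemma my_norm_exp_imag (ξ x : ℝ) : ‖Complex.exp (-(Complex.I * ξ * x))‖ = 1 := by
  rw [Complex.norm_exp]
  simp

theorem stmt_7 (p α β : ℝ) (hp : p ∈ Set.Ioo (0 : ℝ) 1)
    (hα : 0 < α) (hαβ : α < β) :
    Tindex (ENNReal.ofReal (1 - p) • Measure.dirac α
      + ENNReal.ofReal p • Measure.dirac β)
      = (β - α) * p * (1 - p) / (α * (1 - p) + β * p) := by
  obtain ⟨hp0, hp1⟩ := hp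
  set μ := ENNReal.ofReal (1 - p) • Measure.dirac α + ENNReal.ofReal p • Measure.dirac β with hμ
  set m : ℝ := α * (1 - p) + β * p with hm
  have hmpos : 0 < m := by nlinarith
  set c : ℝ := (β - α) * p * (1 - p) / m with hc
  have hcpos : 0 < c := by
    apply div_pos _ hmpos
    have h1 : 0 < β - α := by linarith
    have h2 : 0 < 1 - p := by linarith
    positivity
  have hft : ∀ ξ : ℝ, ft μ ξ
      = (1 - p) * Complex.exp (-(Complex.I * ξ * α)) + p * Complex.exp (-(Complex.I * ξ * β)) := by
    intro ξ
    exact my_integral_two_point hp0 hp1 (by fun_prop)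
  have hft' : ∀ ξ : ℝ, ft' μ ξ
      = (1 - p) * (-(Complex.I * α) * Complex.exp (-(Complex.I * ξ * α)))
        + p * (-(Complex.I * β) * Complex.exp (-(Complex.I * ξ * β))) := by
    intro ξ
    exact my_integral_two_point hp0 hp1 (by fun_prop)
  have hm' : (m : ℂ) = (α : ℂ) * (1 - p) + β * p := by
    rw [hm]; push_cast; ring
  have hft'0 : ft' μ 0 = -(Complex.I * (m : ℂ)) := by
    rw [hft' 0, hm']
    simp
    ring
  have hmC : (m : ℂ) ≠ 0 := by
    exact_mod_cast hmpos.ne'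
  have hkey : ∀ ξ : ℝ, ft μ ξ - ft' μ ξ / ft' μ 0
      = (c : ℂ) * (Complex.exp (-(Complex.I * ξ * α)) - Complex.exp (-(Complex.I * ξ * β))) := by
    intro ξ
    have hmC' : ((α : ℂ) * (1 - (p:ℂ)) + (β:ℂ) * p) ≠ 0 := by
      intro h; apply hmC; rw [hm']; exact h
    rw [hft ξ, hft' ξ, hft'0, hc, hm, hm']
    push_cast
    have hmC'' : ((1 - (p:ℂ)) * α + p * β) ≠ 0 := by
      rw [mul_comm (1 - (p:ℂ)), mul_comm (p:ℂ)]; exact hmC'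
    field_simp
    ring
  have hnorm : ∀ ξ : ℝ, ‖ft μ ξ - ft' μ ξ / ft' μ 0‖
      = c * ‖Complex.exp (-(Complex.I * ξ * α)) - Complex.exp (-(Complex.I * ξ * β))‖ := by
    intro ξ
    rw [hkey ξ, norm_mul, Complex.norm_real, Real.norm_of_nonneg hcpos.le]
  have hbd : ∀ ξ : ℝ, ‖ft μ ξ - ft' μ ξ / ft' μ 0‖ ≤ 2 * c := by
    intro ξ
    rw [hnorm ξ]
    have h2 : ‖Complex.exp (-(Complex.I * ξ * α)) - Complex.exp (-(Complex.I * ξ * β))‖ ≤ 2 := by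
      calc ‖Complex.exp (-(Complex.I * ξ * α)) - Complex.exp (-(Complex.I * ξ * β))‖
          ≤ ‖Complex.exp (-(Complex.I * ξ * α))‖ + ‖Complex.exp (-(Complex.I * ξ * β))‖ :=
            norm_sub_le _ _
        _ = 2 := by rw [my_norm_exp_imag, my_norm_exp_imag]; norm_num
    nlinarith
  have hBdd : BddAbove (Set.range fun ξ : ℝ => ‖ft μ ξ - ft' μ ξ / ft' μ 0‖) := by
    refine ⟨2 * c, ?_⟩
    rintro _ ⟨ξ, rfl⟩
    exact hbd ξ
  -- the supremum is attained (in the closure sense) at ξ₀ = π / (β - α)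
  set ξ₀ : ℝ := Real.pi / (β - α) with hξ₀
  have hβα : β - α ≠ 0 := by linarith
  have hval : ‖ft μ ξ₀ - ft' μ ξ₀ / ft' μ 0‖ = 2 * c := by
    rw [hnorm ξ₀]
    have hexp : Complex.exp (-(Complex.I * ξ₀ * β))
        = - Complex.exp (-(Complex.I * ξ₀ * α)) := by
      have h1 : ((ξ₀ : ℂ)) * ((β : ℂ) - α) = (Real.pi : ℂ) := by
        have h0 : ξ₀ * (β - α) = Real.pi := by rw [hξ₀]; field_simp
        exact_mod_cast h0
      have harg : -(Complex.I * (ξ₀ : ℂ) * β)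
          = -(Complex.I * ξ₀ * α) + -(Real.pi * Complex.I) := by
        linear_combination (-Complex.I) * h1
      have hpi : Complex.exp (-(Real.pi * Complex.I)) = -1 := by
        rw [Complex.exp_neg, Complex.exp_pi_mul_I]; norm_num
      rw [harg, Complex.exp_add, hpi]
      ring
    rw [hexp, sub_neg_eq_add]
    have : Complex.exp (-(Complex.I * ξ₀ * α)) + Complex.exp (-(Complex.I * ξ₀ * α))
        = 2 * Complex.exp (-(Complex.I * ξ₀ * α)) := by ring
    rw [this, norm_mul, my_norm_exp_imag]
    simp
    ring
  have hsup : (⨆ ξ : ℝ, ‖ft μ ξ - ft' μ ξ / ft' μ 0‖) = 2 * c := by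
    apply le_antisymm
    · exact ciSup_le hbd
    · rw [← hval]
      exact le_ciSup hBdd ξ₀
  rw [Tindex, hsup, hc, hm]
  ring
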